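/- arXiv:1605.07951 — 7 statements merged into one kernel-verified Lean document; each statement's English description precedes it below -/
import Mathlib

section
/- Let z_0,…,z_{N-1} be distinct complex numbers, ω_i the barycentric weights, and l(z) = ∏_{i=0}^{N-1}(z − z_i) the node polynomial. For every nonnegative integer α < N and every z ∈ ℂ with z ≠ z_i for all i, one has ∑_{i=0}^{N-1} ω_i z_i^α / (z_i − z) = − z^α / l(z). -/
open Finset Polynomial

theorem barycentric_monomial_identity (N : ℕ) (z : Fin N → ℂ)
    (hz : Function.Injective z) (α : ℕ) (hα : α < N) (w : ℂ) (hw : ∀ i, w ≠ z i) :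
    ∑ i : Fin N, (∏ j ∈ Finset.univ.erase i, (z i - z j))⁻¹ * z i ^ α / (z i - w) =
      - (w ^ α / ∏ i : Fin N, (w - z i)) := by
  have hdeg : (X ^ α : ℂ[X]).degree < (Finset.univ : Finset (Fin N)).card := by
    simpa using (by exact_mod_cast (Nat.cast_lt.mpr hα : (α : WithBot ℕ) < N) :
      (α : WithBot ℕ) < (N : WithBot ℕ))
  have hinj : Set.InjOn z (Finset.univ : Finset (Fin N)) := hz.injOn
  have h := Lagrange.eq_interpolate (v := z) hinj hdeg
  have h2 := congrArg (Polynomial.eval w) h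
  rw [Lagrange.eval_interpolate_not_at_node _ (fun i _ => hw i)] at h2
  simp only [Polynomial.eval_pow, Polynomial.eval_X, Lagrange.eval_nodal] at h2
  have hprod : (∏ i : Fin N, (w - z i)) ≠ 0 := by
    exact Finset.prod_ne_zero_iff.mpr fun i _ => sub_ne_zero.mpr (hw i)
  have key : ∑ i : Fin N, Lagrange.nodalWeight Finset.univ z i * (w - z i)⁻¹ * z i ^ α
      = w ^ α / ∏ i : Fin N, (w - z i) := by
    rw [h2, mul_div_cancel_left₀ _ hprod]
  rw [← key, ← Finset.sum_neg_distrib]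
  refine Finset.sum_congr rfl fun i _ => ?_
  rw [Lagrange.nodalWeight, ← Finset.prod_inv_distrib]
  rw [div_eq_mul_inv]
  have : (z i - w)⁻¹ = -(w - z i)⁻¹ := by
    rw [← inv_neg, neg_sub]
  rw [this]
  ring
end

section
/- For the Chebyshev points of the first kind x_i = cos((2i+1)π/(2N)), i = 0,…,N−1, on [−1,1], the barycentric weights ω_i = 1/∏_{j≠i}(x_i − x_j) satisfy ω_i = c·(−1)^i sin((2i+1)π/(2N)) for some nonzero constant c independent of i. -/
open Finset Real

lemma chebyshev_T_natDegree_le : ∀ n : ℕ, (Polynomial.Chebyshev.T ℝ n).natDegree ≤ n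
  | 0 => by simp [Polynomial.Chebyshev.T_zero]
  | 1 => by simp [Polynomial.Chebyshev.T_one]
  | (n + 2) => by
    have h1 := chebyshev_T_natDegree_le n
    have h2 := chebyshev_T_natDegree_le (n + 1)
    have hcast : ((n + 2 : ℕ) : ℤ) = (n : ℤ) + 2 := by push_cast; ring
    rw [hcast, Polynomial.Chebyshev.T_add_two]
    refine le_trans (Polynomial.natDegree_sub_le _ _) (max_le ?_ ?_)
    · refine le_trans (Polynomial.natDegree_mul_le) ?_
      have hX : (2 * Polynomial.X : Polynomial ℝ).natDegree ≤ 1 := by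
        refine le_trans (Polynomial.natDegree_mul_le) ?_
        simp
      have : ((n : ℤ) + 1) = ((n + 1 : ℕ) : ℤ) := by push_cast; ring
      rw [this]
      omega
    · omega

theorem chebyshev_barycentric_weights (N : ℕ) (hN : 1 ≤ N)
    (x : Fin N → ℝ) (hx : ∀ i : Fin N, x i = Real.cos ((2 * (i : ℕ) + 1) * π / (2 * N))) :
    ∃ c : ℝ, c ≠ 0 ∧ ∀ i : Fin N,
      (∏ j ∈ Finset.univ.erase i, (x i - x j))⁻¹ =
        c * (-1) ^ (i : ℕ) * Real.sin ((2 * (i : ℕ) + 1) * π / (2 * N)) := by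
  classical
  have hNR : (0 : ℝ) < N := by exact_mod_cast Nat.lt_of_lt_of_le Nat.zero_lt_one hN
  set θ : Fin N → ℝ := fun i => (2 * (i : ℕ) + 1) * π / (2 * N) with hθdef
  have hθmem : ∀ i, θ i ∈ Set.Ioo (0 : ℝ) π := by
    intro i
    constructor
    · apply div_pos (by positivity) (by positivity)
    · rw [div_lt_iff₀ (by positivity)]
      have hi : ((i : ℕ) : ℝ) + 1 ≤ N := by exact_mod_cast i.isLt
      nlinarith [Real.pi_pos, hi]
  have hsinpos : ∀ i, 0 < Real.sin (θ i) := fun i =>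
    Real.sin_pos_of_pos_of_lt_pi (hθmem i).1 (hθmem i).2
  have hxcos : ∀ i, x i = Real.cos (θ i) := hx
  -- N * θ i = (i : ℕ) * π + π / 2
  have hNθ : ∀ i, (N : ℝ) * θ i = (i : ℕ) * π + π / 2 := by
    intro i
    rw [hθdef]
    field_simp
  -- injectivity of x on univ
  have hinj : Set.InjOn x (Finset.univ : Finset (Fin N)) := by
    intro i _ j _ h
    rw [hxcos i, hxcos j] at h
    have hmem : ∀ k, θ k ∈ Set.Icc (0 : ℝ) π :=
      fun k => ⟨le_of_lt (hθmem k).1, le_of_lt (hθmem k).2⟩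
    have hθeq : θ i = θ j := Real.injOn_cos (hmem i) (hmem j) h
    rw [hθdef] at hθeq
    field_simp at hθeq
    have h' : ((i : ℕ) : ℝ) = ((j : ℕ) : ℝ) := by linarith
    · have : (i : ℕ) = (j : ℕ) := by exact_mod_cast h'
      exact Fin.ext this
  -- T vanishes at the nodes
  have hTroot : ∀ i, (Polynomial.Chebyshev.T ℝ N).eval (x i) = 0 := by
    intro i
    rw [hxcos i, Polynomial.Chebyshev.T_real_cos]
    push_cast
    rw [hNθ i, Real.cos_add_pi_div_two, Real.sin_nat_mul_pi, neg_zero]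
  set P : Polynomial ℝ := Lagrange.nodal Finset.univ x with hPdef
  have hcard : #(Finset.univ : Finset (Fin N)) = N := by simp
  have hPdeg : P.natDegree = N := by rw [hPdef, Lagrange.natDegree_nodal, hcard]
  have hPmonic : P.Monic := Lagrange.nodal_monic
  set a : ℝ := (Polynomial.Chebyshev.T ℝ N).coeff N with hadef
  -- T = C a * P
  have hkey : Polynomial.Chebyshev.T ℝ N = Polynomial.C a * P := by
    rw [← sub_eq_zero]
    apply Polynomial.eq_zero_of_degree_lt_of_eval_index_eq_zero Finset.univ hinj
    · rw [hcard, Polynomial.degree_lt_iff_coeff_zero]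
      intro m hm
      rcases eq_or_lt_of_le hm with hm' | hm'
      · rw [Polynomial.coeff_sub, Polynomial.coeff_C_mul, ← hm']
        have : P.coeff N = 1 := by
          have := hPmonic.coeff_natDegree
          rwa [hPdeg] at this
        rw [this, ← hadef, mul_one, sub_self]
      · rw [Polynomial.coeff_sub, Polynomial.coeff_C_mul]
        have h1 : (Polynomial.Chebyshev.T ℝ N).coeff m = 0 :=
          Polynomial.coeff_eq_zero_of_natDegree_lt
            (lt_of_le_of_lt (chebyshev_T_natDegree_le N) hm')
        have h2 : P.coeff m = 0 :=
          Polynomial.coeff_eq_zero_of_natDegree_lt (by rw [hPdeg]; exact hm')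
        rw [h1, h2, mul_zero, sub_self]
    · intro i _
      rw [Polynomial.eval_sub, Polynomial.eval_mul, Polynomial.eval_C, hTroot i,
        Lagrange.eval_nodal_at_node (Finset.mem_univ i), mul_zero, sub_self]
  -- derivative identity at the nodes
  have hder : ∀ i, a * (∏ j ∈ Finset.univ.erase i, (x i - x j)) * Real.sin (θ i)
      = (N : ℝ) * (-1) ^ (i : ℕ) := by
    intro i
    have hd := congrArg Polynomial.derivative hkey
    rw [Polynomial.Chebyshev.T_derivative_eq_U, Polynomial.derivative_mul,
      Polynomial.derivative_C, zero_mul, zero_add] at hd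
    have he := congrArg (fun p => Polynomial.eval (x i) p * Real.sin (θ i)) hd
    simp only [Polynomial.eval_mul, Polynomial.eval_C, Polynomial.eval_intCast] at he
    -- left side of he : U side
    have hU : (Polynomial.Chebyshev.U ℝ ((N : ℤ) - 1)).eval (x i) * Real.sin (θ i)
        = (-1) ^ (i : ℕ) := by
      rw [hxcos i, Polynomial.Chebyshev.U_real_cos]
      have : (((N : ℤ) - 1 : ℤ) + 1 : ℝ) * θ i = (i : ℕ) * π + π / 2 := by
        push_cast
        rw [sub_add_cancel, hNθ i]
      rw [this, Real.sin_add_pi_div_two]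
      have := Real.cos_nat_mul_pi_sub 0 (i : ℕ)
      simpa using this
    have hP' : (Polynomial.derivative P).eval (x i)
        = ∏ j ∈ Finset.univ.erase i, (x i - x j) := by
      rw [hPdef, Lagrange.eval_nodal_derivative_eval_node_eq (Finset.mem_univ i),
        Lagrange.eval_nodal]
    rw [hP'] at he
    calc a * (∏ j ∈ Finset.univ.erase i, (x i - x j)) * Real.sin (θ i)
        = ((N : ℤ) : ℝ) * ((Polynomial.Chebyshev.U ℝ ((N : ℤ) - 1)).eval (x i)
            * Real.sin (θ i)) := by linear_combination -he
      _ = (N : ℝ) * (-1) ^ (i : ℕ) := by rw [hU]; push_cast; ring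
  -- nonvanishing
  have hNne : (N : ℝ) ≠ 0 := ne_of_gt hNR
  have hane : a ≠ 0 := by
    intro h
    have := hder ⟨0, Nat.lt_of_lt_of_le Nat.zero_lt_one hN⟩
    rw [h, zero_mul, zero_mul] at this
    have hpow : ((-1 : ℝ)) ^ ((⟨0, Nat.lt_of_lt_of_le Nat.zero_lt_one hN⟩ : Fin N) : ℕ) ≠ 0 :=
      pow_ne_zero _ (by norm_num)
    exact (mul_ne_zero hNne hpow) this.symm
  refine ⟨a / N, div_ne_zero hane hNne, ?_⟩
  intro i
  have hprodne : (∏ j ∈ Finset.univ.erase i, (x i - x j)) ≠ 0 := by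
    intro h
    have := hder i
    rw [h, mul_zero, zero_mul] at this
    exact (mul_ne_zero hNne (pow_ne_zero _ (by norm_num : (-1:ℝ) ≠ 0))) this.symm
  have hpowsq : ((-1 : ℝ)) ^ (i : ℕ) * (-1) ^ (i : ℕ) = 1 := by
    rw [← pow_add]
    exact Even.neg_one_pow ⟨(i : ℕ), rfl⟩
  apply inv_eq_of_mul_eq_one_right
  have h := hder i
  field_simp
  have hθi : θ i = (2 * ((i : ℕ) : ℝ) + 1) * π / (N * 2) := by simp only [hθdef]; ring
  rw [hθi] at h
  linear_combination ((-1 : ℝ)) ^ (i : ℕ) * h + (N : ℝ) * hpowsq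
end

section
/- Let J_{λ,d} denote the d×d Jordan block with eigenvalue λ, and for distinct nodes z_i with barycentric weights ω_i define the d×d upper-triangular Toeplitz matrix Φ_{α,d}(λ) whose (r,s) entry is φ_{α,s−r+1}(λ) for s ≥ r and 0 otherwise, where φ_{α,j}(λ) = ∑_i ω_i z_i^α/(z_i − λ)^j. Then Φ_{α,d}(λ) = J_{λ,d} · Φ_{α−1,d}(λ) for all 1 ≤ α with α < N, provided λ is not a node. -/
open Finset Matrix

/-- `φ_{α,j}(λ)` built from nodes `z` and barycentric weights. -/
noncomputable def phiRI (N : ℕ) (z : Fin N → ℂ) (α j : ℕ) (lam : ℂ) : ℂ :=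
  ∑ i : Fin N, (∏ k ∈ Finset.univ.erase i, (z i - z k))⁻¹ * z i ^ α * ((z i - lam) ^ j)⁻¹

/-- `d × d` Jordan block with eigenvalue `lam`. -/
def jordanBlock (d : ℕ) (lam : ℂ) : Matrix (Fin d) (Fin d) ℂ :=
  fun r s => if (r : ℕ) = s then lam else if (s : ℕ) = r + 1 then 1 else 0

/-- Upper triangular Toeplitz matrix `Φ_{α,d}(lam)` with `(r,s)` entry `φ_{α,s-r+1}(lam)`. -/
noncomputable def PhiRI (N : ℕ) (z : Fin N → ℂ) (α d : ℕ) (lam : ℂ) :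
    Matrix (Fin d) (Fin d) ℂ :=
  fun r s => if (r : ℕ) ≤ s then phiRI N z α ((s : ℕ) - r + 1) lam else 0

open Polynomial in
lemma bary_sum_zero (N : ℕ) (z : Fin N → ℂ) (hz : Function.Injective z)
    (m : ℕ) (hm : m + 1 < N) :
    ∑ i : Fin N, (∏ k ∈ Finset.univ.erase i, (z i - z k))⁻¹ * z i ^ m = 0 := by
  have hinj : Set.InjOn z (Finset.univ : Finset (Fin N)) := hz.injOn
  have hcard : (Finset.univ : Finset (Fin N)).card = N := Finset.card_univ.trans (Fintype.card_fin N)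
  have hdeg : ((X : ℂ[X]) ^ m).degree < (Finset.univ : Finset (Fin N)).card := by
    rw [degree_X_pow, hcard]
    exact_mod_cast Nat.lt_of_succ_lt hm
  have h := Lagrange.eq_interpolate (v := z) hinj hdeg
  have h2 := congrArg (fun p : ℂ[X] => p.coeff (N - 1)) h
  simp only [Lagrange.interpolate_apply, eval_pow, eval_X, finset_sum_coeff,
    coeff_C_mul, coeff_X_pow] at h2
  have hb : ∀ i : Fin N, (Lagrange.basis Finset.univ z i).coeff (N - 1) =
      (∏ k ∈ Finset.univ.erase i, (z i - z k))⁻¹ := by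
    intro i
    have hnd : (Lagrange.basis Finset.univ z i).natDegree = N - 1 := by
      rw [Lagrange.natDegree_basis hinj (Finset.mem_univ i), hcard]
    rw [← hnd, Polynomial.coeff_natDegree, Lagrange.basis, leadingCoeff_prod]
    rw [← Finset.prod_inv_distrib]
    refine Finset.prod_congr rfl fun k hk => ?_
    have hne : z i ≠ z k := fun hzz => (Finset.mem_erase.mp hk).1.symm (hz hzz)
    rw [Lagrange.basisDivisor, leadingCoeff_mul, leadingCoeff_C,
      (monic_X_sub_C _).leadingCoeff, mul_one]
  simp only [hb] at h2
  have h3 : ∑ i : Fin N, (∏ k ∈ Finset.univ.erase i, (z i - z k))⁻¹ * z i ^ m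
      = ∑ i : Fin N, z i ^ m * (∏ k ∈ Finset.univ.erase i, (z i - z k))⁻¹ :=
    Finset.sum_congr rfl fun i _ => mul_comm _ _
  rw [h3, ← h2, if_neg (show ¬ (N - 1 = m) by omega)]

lemma phi_rec (N : ℕ) (z : Fin N → ℂ) (lam : ℂ) (hlam : ∀ i, lam ≠ z i)
    (α j : ℕ) (hα : 1 ≤ α) :
    phiRI N z α (j + 1) lam
      = lam * phiRI N z (α - 1) (j + 1) lam + phiRI N z (α - 1) j lam := by
  unfold phiRI
  rw [Finset.mul_sum, ← Finset.sum_add_distrib]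
  refine Finset.sum_congr rfl fun i _ => ?_
  have hne : z i - lam ≠ 0 := sub_ne_zero.mpr fun h => (hlam i) h.symm
  have hzi : z i ^ α = z i * z i ^ (α - 1) := by
    conv_lhs => rw [show α = (α - 1) + 1 by omega]
    ring
  have key : z i * ((z i - lam) ^ (j + 1))⁻¹
      = lam * ((z i - lam) ^ (j + 1))⁻¹ + ((z i - lam) ^ j)⁻¹ := by
    have hpow : (z i - lam) ^ (j + 1) ≠ 0 := pow_ne_zero _ hne
    field_simp [pow_succ]
    ring
  rw [hzi]
  linear_combination ((∏ k ∈ Finset.univ.erase i, (z i - z k))⁻¹ * z i ^ (α - 1)) * key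

lemma jordan_mul_apply (d : ℕ) (lam : ℂ) (M : Matrix (Fin d) (Fin d) ℂ) (r s : Fin d) :
    (jordanBlock d lam * M) r s
      = lam * M r s + (if h : (r : ℕ) + 1 < d then M ⟨(r : ℕ) + 1, h⟩ s else 0) := by
  rw [Matrix.mul_apply]
  have hsplit : ∀ t : Fin d, jordanBlock d lam r t * M t s
      = (if t = r then lam * M t s else 0) + (if (t : ℕ) = (r : ℕ) + 1 then M t s else 0) := by
    intro t
    unfold jordanBlock
    rcases eq_or_ne t r with h | h
    · subst h
      simp
    · have hrt : (r : ℕ) ≠ (t : ℕ) := fun hh => h (Fin.ext hh.symm)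
      rw [if_neg hrt, if_neg h]
      by_cases h2 : (t : ℕ) = (r : ℕ) + 1
      · simp [h2]
      · simp [h2]
  simp only [hsplit, Finset.sum_add_distrib, Finset.sum_ite_eq', Finset.mem_univ, if_true]
  congr 1
  by_cases h : (r : ℕ) + 1 < d
  · rw [dif_pos h, Finset.sum_eq_single (⟨(r : ℕ) + 1, h⟩ : Fin d)]
    · simp
    · intro t _ ht
      rw [if_neg (fun hh => ht (Fin.ext hh))]
    · simp
  · rw [dif_neg h]
    refine Finset.sum_eq_zero fun t _ => ?_
    refine if_neg fun hh => h ?_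
    rw [← hh]; exact t.isLt

theorem Phi_jordan_recurrence (N : ℕ) (z : Fin N → ℂ) (hz : Function.Injective z)
    (d : ℕ) (lam : ℂ) (hlam : ∀ i, lam ≠ z i) (α : ℕ) (hα1 : 1 ≤ α) (hαN : α < N) :
    PhiRI N z α d lam = jordanBlock d lam * PhiRI N z (α - 1) d lam := by
  ext r s
  rw [jordan_mul_apply]
  by_cases hrs : (r : ℕ) ≤ (s : ℕ)
  · rcases eq_or_lt_of_le hrs with heq | hlt
    · -- diagonal case: s - r = 0
      have h2 : ¬ ((r : ℕ) + 1 ≤ (s : ℕ)) := by omega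
      have hterm : (if h : (r : ℕ) + 1 < d then PhiRI N z (α - 1) d lam ⟨(r : ℕ) + 1, h⟩ s else 0)
          = 0 := by
        by_cases h : (r : ℕ) + 1 < d
        · rw [dif_pos h]; exact if_neg h2
        · rw [dif_neg h]
      rw [hterm, add_zero]
      unfold PhiRI
      rw [if_pos hrs, if_pos hrs, ← heq, Nat.sub_self]
      have h0 : phiRI N z (α - 1) 0 lam = 0 := by
        unfold phiRI
        have := bary_sum_zero N z hz (α - 1) (by omega)
        simpa using this
      have := phi_rec N z lam hlam α 0 hα1
      rw [this, h0, add_zero]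
    · -- strictly above diagonal
      have hlt2 : (r : ℕ) + 1 < d := lt_of_le_of_lt hlt s.isLt
      rw [dif_pos hlt2]
      unfold PhiRI
      rw [if_pos hrs, if_pos hrs, if_pos (show ((⟨(r:ℕ)+1, hlt2⟩ : Fin d) : ℕ) ≤ (s : ℕ) from hlt)]
      have h1 : (s : ℕ) - (r : ℕ) + 1 = ((s : ℕ) - (r : ℕ) - 1) + 1 + 1 := by omega
      have h2 : (s : ℕ) - ((⟨(r:ℕ)+1, hlt2⟩ : Fin d) : ℕ) + 1 = ((s : ℕ) - (r : ℕ) - 1) + 1 := by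
        simp only []
        omega
      rw [h1, h2, phi_rec N z lam hlam α _ hα1]
  · -- below diagonal: everything is 0
    have h2 : ¬ ((r : ℕ) + 1 ≤ (s : ℕ)) := by omega
    unfold PhiRI
    rw [if_neg hrs]
    have hterm : (if h : (r : ℕ) + 1 < d then
        (if ((⟨(r:ℕ)+1, h⟩ : Fin d) : ℕ) ≤ (s : ℕ) then
          phiRI N z (α-1) ((s:ℕ) - ((⟨(r:ℕ)+1, h⟩ : Fin d) : ℕ) + 1) lam else 0) else 0) = 0 := by
      by_cases h : (r : ℕ) + 1 < d
      · rw [dif_pos h]; exact if_neg h2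
      · rw [dif_neg h]
    rw [if_neg hrs, hterm, mul_zero, add_zero]
end

section
/- With notation as above, Φ_{α,d}(λ) = J_{λ,d}^α · Φ_{0,d}(λ) for every 0 ≤ α < N and λ not a node. -/
open Finset Matrix

section Aux
open Polynomial

lemma basis_coeff_top {F : Type*} [Field F] {ι : Type*} [DecidableEq ι]
    {s : Finset ι} {v : ι → F} {i : ι} (hvs : Set.InjOn v s) (hi : i ∈ s) :
    (Lagrange.basis s v i).coeff (#s - 1) = Lagrange.nodalWeight s v i := by
  have hb : Lagrange.basis s v i = C (Lagrange.nodalWeight s v i) * Lagrange.nodal (s.erase i) v := by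
    simp_rw [Lagrange.basis, Lagrange.basisDivisor, Lagrange.nodalWeight, prod_mul_distrib,
      map_prod, Lagrange.nodal]
  rw [hb, coeff_C_mul]
  have hcard : #(s.erase i) = #s - 1 := Finset.card_erase_of_mem hi
  have hmono : (Lagrange.nodal (s.erase i) v).Monic := Lagrange.nodal_monic
  have hdeg : (Lagrange.nodal (s.erase i) v).natDegree = #s - 1 := by
    rw [Lagrange.natDegree_nodal, hcard]
  rw [← hdeg, hmono.coeff_natDegree, mul_one]

lemma sum_weight_pow_eq_zero {N : ℕ} {z : Fin N → ℂ} (hz : Function.Injective z)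
    {α : ℕ} (hα : α + 1 < N) :
    ∑ i : Fin N, (∏ k ∈ Finset.univ.erase i, (z i - z k))⁻¹ * z i ^ α = 0 := by
  have hvs : Set.InjOn z (Finset.univ : Finset (Fin N)) := hz.injOn
  have hcard : #(Finset.univ : Finset (Fin N)) = N := by simp
  have hdeg : (X ^ α : ℂ[X]).degree < #(Finset.univ : Finset (Fin N)) := by
    rw [degree_X_pow, hcard]
    exact_mod_cast lt_of_lt_of_le (Nat.lt_succ_self α) hα.le
  have heq := Lagrange.eq_interpolate (f := (X ^ α : ℂ[X])) hvs hdeg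
  have hco := congrArg (fun p => Polynomial.coeff p (N - 1)) heq
  simp only [Lagrange.interpolate_apply, finset_sum_coeff, coeff_C_mul, eval_pow, eval_X] at hco
  have hb : ∀ i : Fin N, (Lagrange.basis Finset.univ z i).coeff (N - 1)
      = Lagrange.nodalWeight Finset.univ z i := by
    intro i
    have := basis_coeff_top hvs (Finset.mem_univ i)
    rwa [hcard] at this
  rw [coeff_X_pow] at hco
  have hαne : α ≠ N - 1 := by omega
  simp only [hb] at hco
  have hre : ∑ i : Fin N, (∏ k ∈ Finset.univ.erase i, (z i - z k))⁻¹ * z i ^ α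
      = ∑ x : Fin N, z x ^ α * Lagrange.nodalWeight Finset.univ z x := by
    apply Finset.sum_congr rfl
    intro i _
    rw [Lagrange.nodalWeight, ← Finset.prod_inv_distrib]
    ring
  rw [hre, ← hco, if_neg (fun h => hαne h.symm)]
end Aux

lemma phiRI_zero_exp {N : ℕ} {z : Fin N → ℂ} (hz : Function.Injective z)
    {α : ℕ} (hα : α + 1 < N) (lam : ℂ) : phiRI N z α 0 lam = 0 := by
  have := sum_weight_pow_eq_zero hz hα
  simpa [phiRI] using this

lemma phiRI_rec {N : ℕ} (z : Fin N → ℂ) (lam : ℂ) (hlam : ∀ i, lam ≠ z i) (α j : ℕ) :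
    phiRI N z (α + 1) (j + 1) lam
      = phiRI N z α j lam + lam * phiRI N z α (j + 1) lam := by
  unfold phiRI
  rw [Finset.mul_sum, ← Finset.sum_add_distrib]
  apply Finset.sum_congr rfl
  intro i _
  have h : z i - lam ≠ 0 := sub_ne_zero_of_ne (Ne.symm (hlam i))
  have key : z i * ((z i - lam) ^ (j + 1))⁻¹
      = ((z i - lam) ^ j)⁻¹ + lam * ((z i - lam) ^ (j + 1))⁻¹ := by
    field_simp
    ring
  calc (∏ k ∈ Finset.univ.erase i, (z i - z k))⁻¹ * z i ^ (α + 1) * ((z i - lam) ^ (j + 1))⁻¹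
      = (∏ k ∈ Finset.univ.erase i, (z i - z k))⁻¹ * z i ^ α
          * (z i * ((z i - lam) ^ (j + 1))⁻¹) := by ring
    _ = _ := by rw [key]; ring

lemma step_lemma {N : ℕ} {z : Fin N → ℂ} (hz : Function.Injective z)
    (d : ℕ) (lam : ℂ) (hlam : ∀ i, lam ≠ z i) {α : ℕ} (hα : α + 1 < N) :
    PhiRI N z (α + 1) d lam = jordanBlock d lam * PhiRI N z α d lam := by
  ext r s
  rw [Matrix.mul_apply]
  have hsplit : ∀ t : Fin d, jordanBlock d lam r t * PhiRI N z α d lam t s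
      = (if t = r then lam * PhiRI N z α d lam r s else 0)
        + (if (t : ℕ) = (r : ℕ) + 1 then PhiRI N z α d lam t s else 0) := by
    intro t
    by_cases h1 : t = r
    · subst h1
      simp [jordanBlock, show ¬((t:ℕ) = (t:ℕ) + 1) by omega]
    · have h1' : (r : ℕ) ≠ (t : ℕ) := fun h => h1 (Fin.ext h.symm)
      by_cases h2 : (t : ℕ) = (r : ℕ) + 1
      · simp [jordanBlock, h1, h1', h2]
      · simp [jordanBlock, h1, h1', h2]
  simp_rw [hsplit]
  rw [Finset.sum_add_distrib, Finset.sum_ite_eq' Finset.univ r, if_pos (Finset.mem_univ r)]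
  have h2sum : (∑ t : Fin d, if (t : ℕ) = (r : ℕ) + 1 then PhiRI N z α d lam t s else 0)
      = if h : (r : ℕ) + 1 < d then PhiRI N z α d lam ⟨(r : ℕ) + 1, h⟩ s else 0 := by
    by_cases h : (r : ℕ) + 1 < d
    · rw [dif_pos h, Finset.sum_eq_single (⟨(r : ℕ) + 1, h⟩ : Fin d)]
      · simp
      · intro t _ ht
        rw [if_neg (fun he => ht (Fin.ext (by simpa using he)))]
      · intro habs; exact absurd (Finset.mem_univ _) habs
    · rw [dif_neg h]
      apply Finset.sum_eq_zero
      intro t _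
      rw [if_neg (fun he => h (by rw [← he]; exact t.isLt))]
  rw [h2sum]
  rcases lt_trichotomy (r : ℕ) (s : ℕ) with hrs | hrs | hrs
  · -- r < s
    have hrd : (r : ℕ) + 1 < d := lt_of_le_of_lt (by omega : (r:ℕ)+1 ≤ (s:ℕ)) s.isLt
    rw [dif_pos hrd]
    simp only [PhiRI, if_pos hrs.le, if_pos (le_of_lt hrs : (r:ℕ) ≤ s),
      if_pos (by simp; omega : ((⟨(r:ℕ)+1, hrd⟩ : Fin d) : ℕ) ≤ (s:ℕ))]
    have : (s : ℕ) - r + 1 = ((s : ℕ) - ((r : ℕ) + 1) + 1) + 1 := by omega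
    rw [this, phiRI_rec z lam hlam]
    ring
  · -- r = s
    have : (s : ℕ) - r + 1 = 1 := by omega
    simp only [PhiRI, if_pos hrs.le, this]
    rw [show (1 : ℕ) = 0 + 1 from rfl, phiRI_rec z lam hlam, phiRI_zero_exp hz hα]
    have hz2 : (if h : (r : ℕ) + 1 < d then
        (if ((⟨(r:ℕ)+1, h⟩ : Fin d) : ℕ) ≤ (s : ℕ) then phiRI N z α ((s:ℕ) - ((r:ℕ)+1) + 1) lam else 0)
        else 0) = 0 := by
      by_cases h : (r : ℕ) + 1 < d
      · rw [dif_pos h, if_neg (by simp; omega)]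
      · rw [dif_neg h]
    rw [hz2]
    ring
  · -- r > s
    have h0 : ¬ ((r : ℕ) ≤ (s : ℕ)) := by omega
    simp only [PhiRI, if_neg h0]
    have hz2 : (if h : (r : ℕ) + 1 < d then
        (if ((⟨(r:ℕ)+1, h⟩ : Fin d) : ℕ) ≤ (s : ℕ) then phiRI N z α ((s:ℕ) - ((r:ℕ)+1) + 1) lam else 0)
        else 0) = 0 := by
      by_cases h : (r : ℕ) + 1 < d
      · rw [dif_pos h, if_neg (by simp; omega)]
      · rw [dif_neg h]
    rw [hz2]
    ring

theorem Phi_jordan_power (N : ℕ) (z : Fin N → ℂ) (hz : Function.Injective z)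
    (d : ℕ) (lam : ℂ) (hlam : ∀ i, lam ≠ z i) (α : ℕ) (hαN : α < N) :
    PhiRI N z α d lam = jordanBlock d lam ^ α * PhiRI N z 0 d lam := by
  induction α with
  | zero => simp
  | succ n ih =>
    rw [step_lemma hz d lam hlam hαN, ih (by omega), pow_succ', Matrix.mul_assoc]
end

section
/- Conversely, in the setting H = V W^H, H^< = V Λ W^H with V, W ∈ ℂ^{m×p} of full column rank p: if λ ∈ ℂ and x ≠ 0 satisfy H^< x = λ H x and H x ≠ 0, then λ is an eigenvalue of Λ. -/
open Matrix

lemma mulVec_inj_of_rank {m p : ℕ} (V : Matrix (Fin m) (Fin p) ℂ) (hV : V.rank = p)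
    {z : Fin p → ℂ} (hz : V *ᵥ z = 0) : z = 0 := by
  have h := LinearMap.finrank_range_add_finrank_ker V.mulVecLin
  rw [show Module.finrank ℂ (LinearMap.range V.mulVecLin) = V.rank from rfl, hV,
    Module.finrank_fin_fun] at h
  have hker : Module.finrank ℂ (LinearMap.ker V.mulVecLin) = 0 := by omega
  have : LinearMap.ker V.mulVecLin = ⊥ := by
    exact Submodule.finrank_eq_zero.mp hker
  have hz' : z ∈ LinearMap.ker V.mulVecLin := by
    simpa [Matrix.mulVecLin_apply] using hz
  simpa [this] using hz'

theorem pencil_eigenvalue_is_Lambda_eigenvalue (m p : ℕ) (hp : 0 < p) (hpm : p ≤ m)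
    (V W : Matrix (Fin m) (Fin p) ℂ) (hV : V.rank = p) (hW : W.rank = p)
    (Λ : Matrix (Fin p) (Fin p) ℂ) (lam : ℂ) (x : Fin m → ℂ) (hx : x ≠ 0)
    (hpencil : (V * Λ * Wᴴ) *ᵥ x = lam • ((V * Wᴴ) *ᵥ x))
    (hHx : (V * Wᴴ) *ᵥ x ≠ 0) :
    ∃ y : Fin p → ℂ, y ≠ 0 ∧ Λ *ᵥ y = lam • y := by
  set y : Fin p → ℂ := Wᴴ *ᵥ x with hy
  have hyne : y ≠ 0 := by
    intro h
    apply hHx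
    rw [← Matrix.mulVec_mulVec, ← hy, h, Matrix.mulVec_zero]
  refine ⟨y, hyne, ?_⟩
  have key : V *ᵥ (Λ *ᵥ y - lam • y) = 0 := by
    have h1 : V *ᵥ (Λ *ᵥ y) = lam • (V *ᵥ y) := by
      simpa [hy, Matrix.mulVec_mulVec, Matrix.mul_assoc] using hpencil
    rw [Matrix.mulVec_sub, h1, Matrix.mulVec_smul, sub_eq_zero]
  have := mulVec_inj_of_rank V hV key
  exact sub_eq_zero.mp this
end

section
/- Let λ_1,…,λ_p ∈ ℂ be distinct, v_1,…,v_p ∈ ℂ^n, w_1,…,w_p ∈ ℂ^n, and suppose f(z) = ∑_{k=1}^p v_k w_kᴴ/(z − λ_k) (an n×n matrix-valued rational function with simple poles). Given distinct sampling points z_0,…,z_{N-1} disjoint from {λ_k} with barycentric weights ω_i, the moment A_α := ∑_i ω_i z_i^α f(z_i) satisfies A_α = −∑_{k=1}^p (λ_k^α / l(λ_k)) v_k w_kᴴ for all 0 ≤ α < N, where l(z) = ∏_i(z − z_i). -/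
open Finset Matrix Polynomial

lemma key_lagrange {N : ℕ} (α : ℕ) (hα : α < N) (z : Fin N → ℂ)
    (hz : Function.Injective z) (lm : ℂ) (hlm : ∀ i, z i ≠ lm) :
    ∑ i : Fin N, (∏ j ∈ Finset.univ.erase i, (z i - z j))⁻¹ * z i ^ α * (z i - lm)⁻¹
      = -(lm ^ α / ∏ i : Fin N, (lm - z i)) := by
  have hinj : Set.InjOn z (Finset.univ : Finset (Fin N)) := fun a _ b _ h => hz h
  have hdeg : (X ^ α : ℂ[X]).degree < (Finset.univ : Finset (Fin N)).card := by
    simpa [Polynomial.degree_X_pow] using (by exact_mod_cast hα : (α : WithBot ℕ) < N)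
  have hL := Lagrange.eq_interpolate (f := (X ^ α : ℂ[X])) hinj hdeg
  have hev := congrArg (Polynomial.eval lm) hL
  simp only [Lagrange.interpolate_apply, Polynomial.eval_finset_sum, Polynomial.eval_mul,
    Polynomial.eval_C, Polynomial.eval_pow, Polynomial.eval_X, Lagrange.basis,
    Polynomial.eval_prod, Lagrange.basisDivisor, Polynomial.eval_sub] at hev
  -- hev : lm ^ α = ∑ i, z i ^ α * ∏ j ∈ erase i, (z i - z j)⁻¹ * (lm - z j)
  have hP : (∏ i : Fin N, (lm - z i)) ≠ 0 := by
    refine Finset.prod_ne_zero_iff.mpr fun i _ => sub_ne_zero.mpr (Ne.symm (hlm i))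
  have hterm : ∀ i : Fin N,
      (∏ j ∈ Finset.univ.erase i, (z i - z j))⁻¹ * z i ^ α * (z i - lm)⁻¹ * (-(∏ i : Fin N, (lm - z i)))
        = z i ^ α * ∏ j ∈ Finset.univ.erase i, ((z i - z j)⁻¹ * (lm - z j)) := by
    intro i
    have hzi : z i - lm ≠ 0 := sub_ne_zero.mpr (hlm i)
    have hPsplit : (∏ j : Fin N, (lm - z j)) = (lm - z i) * ∏ j ∈ Finset.univ.erase i, (lm - z j) :=
      (Finset.mul_prod_erase _ _ (mem_univ i)).symm
    rw [hPsplit, Finset.prod_mul_distrib, Finset.prod_inv_distrib,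
      show -((lm - z i) * ∏ j ∈ Finset.univ.erase i, (lm - z j))
        = (z i - lm) * ∏ j ∈ Finset.univ.erase i, (lm - z j) from by ring,
      mul_assoc, ← mul_assoc ((z i - lm)⁻¹), inv_mul_cancel₀ hzi, one_mul]
    ring
  have hsum : (∑ i : Fin N, (∏ j ∈ Finset.univ.erase i, (z i - z j))⁻¹ * z i ^ α * (z i - lm)⁻¹)
      * (-(∏ i : Fin N, (lm - z i))) = lm ^ α := by
    rw [Finset.sum_mul]
    simp_rw [hterm]
    exact hev.symm
  have hnz : (-(∏ i : Fin N, (lm - z i))) ≠ 0 := neg_ne_zero.mpr hP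
  rw [eq_div_of_mul_eq hnz hsum, div_neg]

theorem moments_of_simple_pole_resolvent (n p N : ℕ) (hn : 0 < n) (hp : 0 < p)
    (hN : 0 < N) (lam : Fin p → ℂ) (hlam : Function.Injective lam)
    (v w : Fin p → Fin n → ℂ)
    (z : Fin N → ℂ) (hz : Function.Injective z) (hzlam : ∀ i k, z i ≠ lam k)
    (α : ℕ) (hα : α < N)
    (f : ℂ → Matrix (Fin n) (Fin n) ℂ)
    (hf : ∀ u : ℂ, f u = ∑ k : Fin p, (u - lam k)⁻¹ • vecMulVec (v k) (star (w k))) :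
    ∑ i : Fin N, ((∏ j ∈ Finset.univ.erase i, (z i - z j))⁻¹ * z i ^ α) • f (z i)
      = ∑ k : Fin p,
          (-(lam k ^ α / ∏ i : Fin N, (lam k - z i))) • vecMulVec (v k) (star (w k)) := by
  simp_rw [hf, Finset.smul_sum, smul_smul]
  rw [Finset.sum_comm]
  refine Finset.sum_congr rfl fun k _ => ?_
  rw [← Finset.sum_smul]
  rw [key_lagrange α hα z hz (lam k) (fun i => hzlam i k)]
end

section
/- In the simple-pole setting of the previous statement (moments A_α = V D Λ^α Wᴴ with D = diag(−1/l(λ_k)) and Λ = diag(λ_k)), if V, W ∈ ℂ^{n×p} have full column rank p and p·1 ≤ K, then the block Hankel matrices H = (A_{i+j})_{0≤i,j≤K−1} and H^< = (A_{i+j+1})_{0≤i,j≤K−1} satisfy: λ is an eigenvalue of the pencil (H^<, H) with H x ≠ 0 for the corresponding eigenvector implies λ ∈ {λ_1,…,λ_p}. -/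
open Finset Matrix

theorem hankel_pencil_eigenvalues_are_poles (n p K : ℕ) (hn : 0 < n) (hp : 0 < p)
    (hK : 0 < K) (hpK : p ≤ K * n)
    (lam : Fin p → ℂ) (hlam : Function.Injective lam)
    (D : Matrix (Fin p) (Fin p) ℂ) (d : Fin p → ℂ) (hd : ∀ k, d k ≠ 0)
    (hD : D = Matrix.diagonal d)
    (V W : Matrix (Fin n) (Fin p) ℂ) (hV : V.rank = p) (hW : W.rank = p)
    (A : ℕ → Matrix (Fin n) (Fin n) ℂ)
    (hA : ∀ α : ℕ, A α = V * D * (Matrix.diagonal lam) ^ α * Wᴴ)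
    (H Hlt : Matrix (Fin (K * n)) (Fin (K * n)) ℂ)
    (hH : ∀ r c : Fin (K * n),
      H r c = A (((finProdFinEquiv.symm r).1 : ℕ) + ((finProdFinEquiv.symm c).1 : ℕ))
        (finProdFinEquiv.symm r).2 (finProdFinEquiv.symm c).2)
    (hHlt : ∀ r c : Fin (K * n),
      Hlt r c = A (((finProdFinEquiv.symm r).1 : ℕ) + ((finProdFinEquiv.symm c).1 : ℕ) + 1)
        (finProdFinEquiv.symm r).2 (finProdFinEquiv.symm c).2)
    (μ : ℂ) (x : Fin (K * n) → ℂ) (hx : x ≠ 0)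
    (hpencil : Hlt *ᵥ x = μ • (H *ᵥ x)) (hHx : H *ᵥ x ≠ 0) :
    ∃ k : Fin p, μ = lam k := by
  -- entrywise formula for A
  have hAe : ∀ (α : ℕ) (a b : Fin n),
      A α a b = ∑ k, V a k * d k * lam k ^ α * (starRingEnd ℂ) (W b k) := by
    intro α a b
    rw [hA, hD, Matrix.diagonal_pow, Matrix.mul_apply]
    simp only [Matrix.mul_diagonal, Matrix.conjTranspose_apply, Pi.pow_apply, starRingEnd_apply]
  set F : Matrix (Fin (K * n)) (Fin p) ℂ :=
    fun r k => V (finProdFinEquiv.symm r).2 k * d k *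
      lam k ^ (((finProdFinEquiv.symm r).1 : ℕ)) with hF
  set y : Fin p → ℂ :=
    fun k => ∑ c, lam k ^ (((finProdFinEquiv.symm c).1 : ℕ)) *
      (starRingEnd ℂ) (W (finProdFinEquiv.symm c).2 k) * x c with hy
  have hH' : ∀ r, (H *ᵥ x) r = ∑ k, F r k * y k := by
    intro r
    simp only [Matrix.mulVec, dotProduct, hH, hAe, Finset.sum_mul]
    rw [Finset.sum_comm]
    refine Finset.sum_congr rfl fun k _ => ?_
    rw [hy, hF]
    simp only [Finset.mul_sum]
    refine Finset.sum_congr rfl fun c _ => ?_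
    rw [pow_add]; ring
  have hHlt' : ∀ r, (Hlt *ᵥ x) r = ∑ k, F r k * (lam k * y k) := by
    intro r
    simp only [Matrix.mulVec, dotProduct, hHlt, hAe, Finset.sum_mul]
    rw [Finset.sum_comm]
    refine Finset.sum_congr rfl fun k _ => ?_
    rw [hy, hF]
    simp only [Finset.mul_sum]
    refine Finset.sum_congr rfl fun c _ => ?_
    rw [pow_add, pow_add, pow_one]; ring
  -- z vanishes under F
  set z : Fin p → ℂ := fun k => (lam k - μ) * y k with hz
  have hFz : ∀ r, ∑ k, F r k * z k = 0 := by
    intro r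
    have h1 := congrFun hpencil r
    rw [hHlt'] at h1
    have h2 : (μ • (H *ᵥ x)) r = ∑ k, F r k * (μ * y k) := by
      simp only [Pi.smul_apply, smul_eq_mul, hH' r, Finset.mul_sum]
      refine Finset.sum_congr rfl fun k _ => ?_
      ring
    rw [h2] at h1
    have : ∑ k, (F r k * (lam k * y k) - F r k * (μ * y k)) = 0 := by
      rw [Finset.sum_sub_distrib, h1, sub_self]
    rw [← this]
    refine Finset.sum_congr rfl fun k _ => ?_
    rw [hz]; ring
  -- injectivity of V on columns
  have hVinj : ∀ u : Fin p → ℂ, V *ᵥ u = 0 → u = 0 := by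
    intro u hu
    have hrank : V.rank = Module.finrank ℂ (LinearMap.range V.mulVecLin) := rfl
    have hker : Module.finrank ℂ (LinearMap.ker V.mulVecLin) = 0 := by
      have := LinearMap.finrank_range_add_finrank_ker V.mulVecLin
      rw [← hrank, hV] at this
      simpa [Module.finrank_fintype_fun_eq_card] using this
    have hkertriv : LinearMap.ker V.mulVecLin = ⊥ :=
      Submodule.finrank_eq_zero.mp hker
    have : u ∈ LinearMap.ker V.mulVecLin := by
      simpa [Matrix.mulVecLin_apply] using hu
    rw [hkertriv] at this
    simpa using this
  -- use the top block (row block index 0)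
  have hdz : V *ᵥ (fun k => d k * z k) = 0 := by
    funext b
    have hr := hFz (finProdFinEquiv (⟨0, hK⟩, b))
    rw [hF] at hr
    simp only [Equiv.symm_apply_apply] at hr
    simp only [Matrix.mulVec, dotProduct, Pi.zero_apply]
    rw [← hr]
    refine Finset.sum_congr rfl fun k _ => ?_
    ring
  have hzzero : ∀ k, z k = 0 := by
    have := hVinj _ hdz
    intro k
    have hk := congrFun this k
    simp only [Pi.zero_apply] at hk
    exact (mul_eq_zero.mp hk).resolve_left (hd k)
  -- y ≠ 0
  have hyne : ∃ k, y k ≠ 0 := by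
    by_contra h
    push_neg at h
    apply hHx
    funext r
    simp [hH' r, h]
  obtain ⟨k, hk⟩ := hyne
  refine ⟨k, ?_⟩
  have := hzzero k
  rw [hz] at this
  have := (mul_eq_zero.mp this).resolve_right hk
  have : lam k = μ := by linear_combination this
  exact this.symm
end
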